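/- arXiv:2602.22651 — 4 statements merged into one kernel-verified Lean document; each statement's English description precedes it below -/
import Mathlib

section
/- Let F be a completely positive trace-preserving map on operators of a finite-dimensional Hilbert space. If F is unital, i.e., F(𝟙) = 𝟙, then for every density matrix ρ, the von Neumann entropy satisfies S(F(ρ)) ≥ S(ρ). -/
open Matrix
open scoped ComplexOrder

/-- Von Neumann entropy of a matrix (junk value `0` if the matrix is not Hermitian). -/
noncomputable def vnEntropy {n : Type*} [Fintype n] [DecidableEq n]
    (A : Matrix n n ℂ) : ℝ :=
  if h : A.IsHermitian then ∑ i, Real.negMulLog (h.eigenvalues i) else 0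

/-- A unital CPTP map (given by Kraus operators) does not decrease the von Neumann entropy. -/
theorem stmt_5 {n ι : Type*} [Fintype n] [DecidableEq n] [Nonempty n] [Fintype ι]
    (K : ι → Matrix n n ℂ)
    (htp : ∑ a, (K a).conjTranspose * K a = 1)
    (hunital : ∑ a, K a * (K a).conjTranspose = 1)
    (ρ : Matrix n n ℂ) (hρ : ρ.PosSemidef) (htr : ρ.trace = 1) :
    vnEntropy ρ ≤ vnEntropy (∑ a, K a * ρ * (K a).conjTranspose) := by
  classical
  set σ : Matrix n n ℂ := ∑ a, K a * ρ * (K a).conjTranspose with hσdef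
  have hρH : ρ.IsHermitian := hρ.1
  have hσH : σ.IsHermitian := by
    unfold Matrix.IsHermitian
    rw [hσdef, conjTranspose_sum]
    refine Finset.sum_congr rfl fun a _ => ?_
    simp [Matrix.conjTranspose_mul, Matrix.mul_assoc, hρH.eq]
  set U : Matrix n n ℂ := (hρH.eigenvectorUnitary : Matrix n n ℂ) with hUdef
  set V : Matrix n n ℂ := (hσH.eigenvectorUnitary : Matrix n n ℂ) with hVdef
  set p : n → ℝ := hρH.eigenvalues with hpdef
  set q : n → ℝ := hσH.eigenvalues with hqdef
  have hU1 : star U * U = 1 := Matrix.mem_unitaryGroup_iff'.mp hρH.eigenvectorUnitary.2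
  have hU2 : U * star U = 1 := Matrix.mem_unitaryGroup_iff.mp hρH.eigenvectorUnitary.2
  have hV1 : star V * V = 1 := Matrix.mem_unitaryGroup_iff'.mp hσH.eigenvectorUnitary.2
  -- the matrices M a and the doubly stochastic matrix B
  set M : ι → Matrix n n ℂ := fun a => star V * K a * U with hMdef
  set B : n → n → ℝ := fun i j => ∑ a, Complex.normSq (M a i j) with hBdef
  have hBnonneg : ∀ i j, 0 ≤ B i j := fun i j =>
    Finset.sum_nonneg fun a _ => Complex.normSq_nonneg _
  -- diagonal form of σ
  have hdiagσ : star V * σ * V = diagonal (Complex.ofReal ∘ q) :=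
    by
      have h := hσH.conjStarAlgAut_star_eigenvectorUnitary
      rw [Unitary.conjStarAlgAut_star_apply] at h
      exact h
  have hspecρ : ρ = U * diagonal (Complex.ofReal ∘ p) * star U := hρH.spectral_theorem
  -- key identity: q i = ∑ j, B i j * p j
  have hq : ∀ i, q i = ∑ j, B i j * p j := by
    intro i
    have h1 : (q i : ℂ) = (star V * σ * V) i i := by
      rw [hdiagσ]; simp [diagonal]
    have h2 : star V * σ * V = ∑ a, M a * diagonal (Complex.ofReal ∘ p) * (M a)ᴴ := by
      rw [hσdef, Finset.mul_sum, Finset.sum_mul]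
      refine Finset.sum_congr rfl fun a _ => ?_
      rw [hspecρ, hMdef]
      simp only [Matrix.conjTranspose_mul, Matrix.star_eq_conjTranspose,
        Matrix.conjTranspose_conjTranspose, Matrix.mul_assoc]
    have h3 : ∀ a, (M a * diagonal (Complex.ofReal ∘ p) * (M a)ᴴ) i i
        = ∑ j, (Complex.normSq (M a i j) : ℂ) * (p j : ℂ) := by
      intro a
      rw [Matrix.mul_apply]
      refine Finset.sum_congr rfl fun j _ => ?_
      rw [Matrix.mul_diagonal, Matrix.conjTranspose_apply, RCLike.star_def]
      simp only [Function.comp_apply]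
      rw [mul_right_comm, Complex.mul_conj]
    have h4 : (q i : ℂ) = ∑ j, (B i j : ℂ) * (p j : ℂ) := by
      rw [h1, h2, Matrix.sum_apply]
      simp_rw [h3]
      rw [Finset.sum_comm]
      simp only [hBdef]
      push_cast
      simp [Finset.sum_mul]
    exact_mod_cast h4
  -- row sums of B are 1
  have hrow : ∀ i, ∑ j, B i j = 1 := by
    intro i
    have h2 : ∑ a, M a * (M a)ᴴ = 1 := by
      have : ∀ a, M a * (M a)ᴴ = star V * (K a * (K a)ᴴ) * V := by
        intro a
        rw [hMdef]
        simp only [Matrix.conjTranspose_mul, Matrix.star_eq_conjTranspose,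
          Matrix.conjTranspose_conjTranspose]
        calc Vᴴ * K a * U * (Uᴴ * ((K a)ᴴ * V))
            = Vᴴ * K a * (U * Uᴴ) * ((K a)ᴴ * V) := by
              simp only [Matrix.mul_assoc]
          _ = Vᴴ * (K a * (K a)ᴴ) * V := by
              rw [show U * Uᴴ = 1 from hU2]
              simp only [Matrix.mul_one, Matrix.mul_assoc]
      simp_rw [this]
      rw [← Finset.sum_mul, ← Finset.mul_sum, hunital, Matrix.mul_one, hV1]
    have h3 : ((1 : Matrix n n ℂ)) i i = ∑ a, ∑ j, (Complex.normSq (M a i j) : ℂ) := by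
      rw [← h2, Matrix.sum_apply]
      refine Finset.sum_congr rfl fun a _ => ?_
      rw [Matrix.mul_apply]
      refine Finset.sum_congr rfl fun j _ => ?_
      rw [Matrix.conjTranspose_apply, RCLike.star_def, Complex.mul_conj]
    have h4 : ∑ j, ((B i j : ℝ) : ℂ) = 1 := by
      simp only [hBdef]
      push_cast
      rw [Finset.sum_comm, ← h3, Matrix.one_apply_eq]
    exact_mod_cast h4
  -- column sums of B are 1
  have hcol : ∀ j, ∑ i, B i j = 1 := by
    intro j
    have h2 : ∑ a, (M a)ᴴ * M a = 1 := by
      have : ∀ a, (M a)ᴴ * M a = star U * ((K a)ᴴ * K a) * U := by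
        intro a
        rw [hMdef]
        simp only [Matrix.conjTranspose_mul, Matrix.star_eq_conjTranspose,
          Matrix.conjTranspose_conjTranspose]
        calc Uᴴ * ((K a)ᴴ * V) * (Vᴴ * K a * U)
            = Uᴴ * (K a)ᴴ * (V * Vᴴ) * (K a * U) := by
              simp only [Matrix.mul_assoc]
          _ = Uᴴ * ((K a)ᴴ * K a) * U := by
              rw [show V * Vᴴ = 1 from
                Matrix.mem_unitaryGroup_iff.mp hσH.eigenvectorUnitary.2]
              simp only [Matrix.mul_one, Matrix.mul_assoc]
      simp_rw [this]
      rw [← Finset.sum_mul, ← Finset.mul_sum, htp, Matrix.mul_one, hU1]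
    have h3 : ((1 : Matrix n n ℂ)) j j = ∑ a, ∑ i, (Complex.normSq (M a i j) : ℂ) := by
      rw [← h2, Matrix.sum_apply]
      refine Finset.sum_congr rfl fun a _ => ?_
      rw [Matrix.mul_apply]
      refine Finset.sum_congr rfl fun i _ => ?_
      rw [Matrix.conjTranspose_apply, RCLike.star_def, ← Complex.normSq_eq_conj_mul_self]
    have h4 : ∑ i, ((B i j : ℝ) : ℂ) = 1 := by
      simp only [hBdef]
      push_cast
      rw [Finset.sum_comm, ← h3, Matrix.one_apply_eq]
    exact_mod_cast h4
  have hpnonneg : ∀ j, 0 ≤ p j := fun j => hρ.eigenvalues_nonneg j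
  -- conclude via Jensen
  rw [vnEntropy, vnEntropy, dif_pos hρH, dif_pos hσH]
  calc ∑ j, Real.negMulLog (p j)
      = ∑ j, (∑ i, B i j) * Real.negMulLog (p j) := by
        refine Finset.sum_congr rfl fun j _ => ?_
        rw [hcol j, one_mul]
    _ = ∑ i, ∑ j, B i j * Real.negMulLog (p j) := by
        rw [Finset.sum_comm]
        simp_rw [Finset.sum_mul]
    _ ≤ ∑ i, Real.negMulLog (q i) := by
        refine Finset.sum_le_sum fun i _ => ?_
        have hj := Real.concaveOn_negMulLog.le_map_sum
          (t := Finset.univ) (w := B i) (p := p)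
          (fun j _ => hBnonneg i j) (hrow i) (fun j _ => hpnonneg j)
        simp_rw [smul_eq_mul] at hj
        rw [hq i]
        exact hj
end

section
/- The function f(x, y) = (x²/y) · Φ(x/y)⁻² is concave on the domain {(x, y) : x ≥ 0, y > 0}, where Φ is the inverse of z ↦ z tanh(z) on [0, ∞). -/
open Real

noncomputable def QQ (z : ℝ) : ℝ := 2 / (Real.cosh z ^ 2 + z * Real.cosh z / Real.sinh z)

lemma lem_sc {z : ℝ} (hz : 0 ≤ z) : z ≤ Real.sinh z * Real.cosh z := by
  rcases eq_or_lt_of_le hz with h | h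
  · simp [← h]
  · have h1 : z < Real.sinh z := Real.self_lt_sinh_iff.2 h
    nlinarith [Real.one_le_cosh z, Real.sinh_pos_iff.2 h]

lemma lem_Dpos {z : ℝ} (hz : 0 < z) : 0 < Real.cosh z ^ 2 + z * Real.cosh z / Real.sinh z := by
  have h1 := Real.cosh_pos z
  have h2 := Real.sinh_pos_iff.2 hz
  positivity

lemma lem_Qpos {z : ℝ} (hz : 0 < z) : 0 < QQ z :=
  div_pos two_pos (lem_Dpos hz)

lemma lem_hasDerivD {z : ℝ} (hz : 0 < z) :
    HasDerivAt (fun z => Real.cosh z ^ 2 + z * Real.cosh z / Real.sinh z)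
      (2 * Real.cosh z * Real.sinh z +
        (((1 : ℝ) * Real.cosh z + z * Real.sinh z) * Real.sinh z - z * Real.cosh z * Real.cosh z) / Real.sinh z ^ 2) z := by
  have hs : Real.sinh z ≠ 0 := ne_of_gt (Real.sinh_pos_iff.2 hz)
  have h1 : HasDerivAt (fun z => Real.cosh z ^ 2) (2 * Real.cosh z * Real.sinh z) z := by
    have := (Real.hasDerivAt_cosh z).pow 2
    refine this.congr_deriv ?_; norm_num
  have h2 : HasDerivAt (fun z => z * Real.cosh z / Real.sinh z)
      ((((1:ℝ) * Real.cosh z + z * Real.sinh z) * Real.sinh z - z * Real.cosh z * Real.cosh z) / Real.sinh z ^ 2) z := by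
    exact ((hasDerivAt_id z).mul (Real.hasDerivAt_cosh z)).div (Real.hasDerivAt_sinh z) hs
  exact h1.add h2

lemma lem_Dmono : MonotoneOn (fun z => Real.cosh z ^ 2 + z * Real.cosh z / Real.sinh z) (Set.Ioi (0:ℝ)) := by
  apply monotoneOn_of_deriv_nonneg (convex_Ioi 0)
  · intro z hz
    have hz' : (0:ℝ) < z := hz
    exact ((lem_hasDerivD hz').continuousAt).continuousWithinAt
  · intro z hz
    rw [interior_Ioi] at hz
    exact (lem_hasDerivD hz).differentiableAt.differentiableWithinAt
  · intro z hz
    rw [interior_Ioi] at hz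
    rw [(lem_hasDerivD hz).deriv]
    have hs := Real.sinh_pos_iff.2 hz
    have hc := Real.cosh_pos z
    have hsc := lem_sc hz.le
    have hid : Real.cosh z ^ 2 - Real.sinh z ^ 2 = 1 := by
      nlinarith [Real.cosh_sq z]
    have key : ((1 : ℝ) * Real.cosh z + z * Real.sinh z) * Real.sinh z - z * Real.cosh z * Real.cosh z
        = Real.sinh z * Real.cosh z - z := by linear_combination (-z) * hid
    rw [key]
    have : 0 ≤ (Real.sinh z * Real.cosh z - z) / Real.sinh z ^ 2 := div_nonneg (by linarith) (by positivity)
    nlinarith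

lemma lem_Qanti {z₁ z₂ : ℝ} (h1 : 0 < z₁) (h12 : z₁ ≤ z₂) : QQ z₂ ≤ QQ z₁ := by
  have h2 : 0 < z₂ := lt_of_lt_of_le h1 h12
  have := lem_Dmono (Set.mem_Ioi.2 h1) (Set.mem_Ioi.2 h2) h12
  exact div_le_div_of_nonneg_left (by norm_num) (lem_Dpos h1) this


lemma lem_hasDerivF (A : ℝ) (ζ : ℝ) :
    HasDerivAt (fun ζ => A * (ζ * Real.sinh ζ / Real.cosh ζ) - (Real.sinh ζ / Real.cosh ζ) ^ 2)
      (A * ((Real.sinh ζ * Real.cosh ζ + ζ) / Real.cosh ζ ^ 2) - 2 * Real.sinh ζ / Real.cosh ζ ^ 3) ζ := by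
  have hc : Real.cosh ζ ≠ 0 := ne_of_gt (Real.cosh_pos ζ)
  have hid : Real.cosh ζ ^ 2 - Real.sinh ζ ^ 2 = 1 := by nlinarith [Real.cosh_sq ζ]
  have h1 : HasDerivAt (fun ζ => ζ * Real.sinh ζ / Real.cosh ζ)
      ((((1:ℝ) * Real.sinh ζ + ζ * Real.cosh ζ) * Real.cosh ζ - ζ * Real.sinh ζ * Real.sinh ζ) / Real.cosh ζ ^ 2) ζ :=
    ((hasDerivAt_id ζ).mul (Real.hasDerivAt_sinh ζ)).div (Real.hasDerivAt_cosh ζ) hc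
  have h2 : HasDerivAt (fun ζ => (Real.sinh ζ / Real.cosh ζ) ^ 2)
      (2 * (Real.sinh ζ / Real.cosh ζ) ^ 1 * ((Real.cosh ζ * Real.cosh ζ - Real.sinh ζ * Real.sinh ζ) / Real.cosh ζ ^ 2)) ζ :=
    ((Real.hasDerivAt_sinh ζ).div (Real.hasDerivAt_cosh ζ) hc).pow 2
  have h3 := (h1.const_mul A).sub h2
  refine h3.congr_deriv ?_
  field_simp
  linear_combination (A * Real.cosh ζ * ζ - 2 * Real.sinh ζ) * hid

lemma lem_Qid {ζ : ℝ} (hζ : 0 < ζ) :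
    QQ ζ * ((Real.sinh ζ * Real.cosh ζ + ζ) / Real.cosh ζ ^ 2) = 2 * Real.sinh ζ / Real.cosh ζ ^ 3 := by
  have hc : Real.cosh ζ ≠ 0 := ne_of_gt (Real.cosh_pos ζ)
  have hs : Real.sinh ζ ≠ 0 := ne_of_gt (Real.sinh_pos_iff.2 hζ)
  have hD : Real.cosh ζ ^ 2 + ζ * Real.cosh ζ / Real.sinh ζ ≠ 0 := ne_of_gt (lem_Dpos hζ)
  unfold QQ
  field_simp

lemma lem_core {z w : ℝ} (hz : 0 < z) (hw : 0 ≤ w) :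
    Real.tanh w ^ 2 ≤ Real.tanh z ^ 2 + QQ z * (w * Real.tanh w - z * Real.tanh z) := by
  set F : ℝ → ℝ := fun ζ => QQ z * (ζ * Real.sinh ζ / Real.cosh ζ) - (Real.sinh ζ / Real.cosh ζ) ^ 2 with hF
  have key : F z ≤ F w := by
    have deriv_eq : ∀ ζ : ℝ, deriv F ζ =
        QQ z * ((Real.sinh ζ * Real.cosh ζ + ζ) / Real.cosh ζ ^ 2) - 2 * Real.sinh ζ / Real.cosh ζ ^ 3 :=
      fun ζ => (lem_hasDerivF (QQ z) ζ).deriv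
    have hdiff : ∀ ζ : ℝ, DifferentiableAt ℝ F ζ := fun ζ => (lem_hasDerivF (QQ z) ζ).differentiableAt
    have hcont : Continuous F := by
      fun_prop (disch := intro x; exact ne_of_gt (Real.cosh_pos x))
    rcases le_or_gt z w with hzw | hwz
    · have mono : MonotoneOn F (Set.Icc z w) := by
        apply monotoneOn_of_deriv_nonneg (convex_Icc z w) hcont.continuousOn
          (fun ζ _ => (hdiff ζ).differentiableWithinAt)
        intro ζ hζ
        rw [interior_Icc] at hζ
        have hζ0 : 0 < ζ := lt_trans hz hζ.1
        have hq : QQ ζ ≤ QQ z := lem_Qanti hz hζ.1.le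
        rw [deriv_eq, ← lem_Qid hζ0]
        have hpos : 0 ≤ (Real.sinh ζ * Real.cosh ζ + ζ) / Real.cosh ζ ^ 2 := by
          have := Real.sinh_pos_iff.2 hζ0
          have := Real.cosh_pos ζ
          positivity
        nlinarith
      exact mono (Set.left_mem_Icc.2 hzw) (Set.right_mem_Icc.2 hzw) hzw
    · have anti : AntitoneOn F (Set.Icc w z) := by
        apply antitoneOn_of_deriv_nonpos (convex_Icc w z) hcont.continuousOn
          (fun ζ _ => (hdiff ζ).differentiableWithinAt)
        intro ζ hζ
        rw [interior_Icc] at hζ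
        have hζ0 : 0 < ζ := lt_of_le_of_lt hw hζ.1
        have hq : QQ z ≤ QQ ζ := lem_Qanti hζ0 hζ.2.le
        rw [deriv_eq, ← lem_Qid hζ0]
        have hpos : 0 ≤ (Real.sinh ζ * Real.cosh ζ + ζ) / Real.cosh ζ ^ 2 := by
          have := Real.sinh_pos_iff.2 hζ0
          have := Real.cosh_pos ζ
          positivity
        nlinarith
      exact anti (Set.left_mem_Icc.2 hwz.le) (Set.right_mem_Icc.2 hwz.le) hwz.le
    done
  rw [Real.tanh_eq_sinh_div_cosh, Real.tanh_eq_sinh_div_cosh]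
  simp only [hF] at key
  ring_nf at key ⊢
  linarith

lemma lem_tanh_half {b : ℝ} (hb : 1 ≤ b) : 1 / 2 ≤ Real.tanh b := by
  rw [Real.tanh_eq_sinh_div_cosh, le_div_iff₀ (Real.cosh_pos b)]
  rw [Real.sinh_eq, Real.cosh_eq, Real.exp_neg]
  have h1 : Real.exp 1 ≤ Real.exp b := Real.exp_le_exp.2 hb
  have h2 := Real.exp_one_gt_d9
  have h3 := Real.exp_pos b
  nlinarith [mul_inv_cancel₀ (ne_of_gt h3), inv_pos.2 h3]

lemma lem_surj {u : ℝ} (hu : 0 ≤ u) : ∃ w, 0 ≤ w ∧ w * Real.tanh w = u := by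
  have hcont : Continuous (fun w : ℝ => w * Real.tanh w) := by
    have : Continuous Real.tanh := by
      have : Real.tanh = fun x => Real.sinh x / Real.cosh x := funext Real.tanh_eq_sinh_div_cosh
      rw [this]
      exact Real.continuous_sinh.div Real.continuous_cosh fun x => ne_of_gt (Real.cosh_pos x)
    exact continuous_id.mul this
  set b : ℝ := 2 * u + 1 with hbdef
  have hb1 : (1:ℝ) ≤ b := by simp [hbdef]; linarith
  have hb0 : (0:ℝ) ≤ b := by linarith
  have hgb : u ≤ b * Real.tanh b := by
    have := lem_tanh_half hb1
    nlinarith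
  have := intermediate_value_Icc hb0 hcont.continuousOn
  have hmem : u ∈ Set.Icc ((fun w : ℝ => w * Real.tanh w) 0) ((fun w : ℝ => w * Real.tanh w) b) := by
    simp only [Real.tanh_zero, mul_zero, zero_mul]
    exact ⟨hu, hgb⟩
  obtain ⟨w, hw, hwu⟩ := this hmem
  exact ⟨w, hw.1, hwu⟩

lemma lem_val {x y w : ℝ} (hy : 0 < y) (hw : 0 ≤ w) (hwu : w * Real.tanh w = x / y) :
    x ^ 2 / y * (w⁻¹) ^ 2 = y * Real.tanh w ^ 2 := by
  rcases eq_or_lt_of_le hw with h | h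
  · have hx : x = 0 := by
      have : x / y = 0 := by rw [← hwu, ← h]; simp
      field_simp at this; simpa using this
    simp [hx, ← h]
  · have hx : x = y * (w * Real.tanh w) := by
      rw [hwu]; field_simp
    rw [hx]
    field_simp

/-- With `Φ` the inverse of `z ↦ z tanh z` on `[0,∞)`, the function
`f(x,y) = (x²/y) Φ(x/y)⁻²` is concave on `{(x,y) : x ≥ 0, y > 0}`. -/
theorem stmt_13 (Φ : ℝ → ℝ)
    (hΦ0 : ∀ x ∈ Set.Ici (0 : ℝ), Φ x ∈ Set.Ici (0 : ℝ))
    (hΦ : ∀ z ∈ Set.Ici (0 : ℝ), Φ (z * Real.tanh z) = z) :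
    ConcaveOn ℝ {q : ℝ × ℝ | 0 ≤ q.1 ∧ 0 < q.2}
      (fun q : ℝ × ℝ => q.1 ^ 2 / q.2 * (Φ (q.1 / q.2))⁻¹ ^ 2) := by
  set S : Set (ℝ × ℝ) := {q : ℝ × ℝ | 0 ≤ q.1 ∧ 0 < q.2} with hS
  set f : ℝ × ℝ → ℝ := fun q => q.1 ^ 2 / q.2 * (Φ (q.1 / q.2))⁻¹ ^ 2 with hf
  -- value of f via parametrization
  have hval : ∀ p ∈ S, ∀ w : ℝ, 0 ≤ w → w * Real.tanh w = p.1 / p.2 →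
      f p = p.2 * Real.tanh w ^ 2 := by
    intro p hp w hw hwu
    have hΦw : Φ (p.1 / p.2) = w := by rw [← hwu]; exact hΦ w hw
    simp only [hf, hΦw]
    exact lem_val hp.2 hw hwu
  -- affine upper bound on f over S, for any z > 0
  have haff : ∀ z : ℝ, 0 < z → ∀ p ∈ S,
      f p ≤ QQ z * p.1 + (Real.tanh z ^ 2 - QQ z * (z * Real.tanh z)) * p.2 := by
    intro z hz p hp
    have hu : 0 ≤ p.1 / p.2 := div_nonneg hp.1 hp.2.le
    obtain ⟨w, hw, hwu⟩ := lem_surj hu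
    rw [hval p hp w hw hwu]
    have hcore := lem_core hz hw
    have hp2 := hp.2
    have h1 : p.2 * (w * Real.tanh w) = p.1 := by
      rw [hwu, mul_comm, div_mul_cancel₀ p.1 hp.2.ne']
    calc p.2 * Real.tanh w ^ 2
        ≤ p.2 * (Real.tanh z ^ 2 + QQ z * (w * Real.tanh w - z * Real.tanh z)) :=
          mul_le_mul_of_nonneg_left hcore hp.2.le
      _ = QQ z * (p.2 * (w * Real.tanh w)) + (Real.tanh z ^ 2 - QQ z * (z * Real.tanh z)) * p.2 := by ring
      _ = QQ z * p.1 + (Real.tanh z ^ 2 - QQ z * (z * Real.tanh z)) * p.2 := by rw [h1]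
  have hconv : Convex ℝ S := by
    intro p hp q hq a b ha hb hab
    constructor
    · have : 0 ≤ a * p.1 + b * q.1 := by
        have := hp.1; have := hq.1; positivity
      simpa using this
    · have : 0 < a * p.2 + b * q.2 := by
        rcases eq_or_lt_of_le ha with h | h
        · have hb1 : b = 1 := by linarith
          simp [← h, hb1, hq.2]
        · have : 0 ≤ b * q.2 := mul_nonneg hb hq.2.le
          nlinarith [hp.2]
      simpa using this
  constructor
  · exact hconv
  · intro p hp q hq a b ha hb hab
    set m := a • p + b • q with hm
    have hmS : m ∈ S := hconv hp hq ha hb hab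
    have hm1 : m.1 = a * p.1 + b * q.1 := by simp [hm]
    have hm2 : m.2 = a * p.2 + b * q.2 := by simp [hm]
    have hu : 0 ≤ m.1 / m.2 := div_nonneg hmS.1 hmS.2.le
    obtain ⟨w, hw, hwu⟩ := lem_surj hu
    have hfm : f m = m.2 * Real.tanh w ^ 2 := hval m hmS w hw hwu
    have hsmul : a • f p + b • f q = a * f p + b * f q := rfl
    rcases eq_or_lt_of_le hw with h0 | h0
    · -- w = 0 : then m.1 = 0, so a * p.1 = 0, b * q.1 = 0, everything vanishes
      have hm10 : m.1 = 0 := by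
        have h : m.1 / m.2 = 0 := by rw [← hwu, ← h0]; simp
        rcases div_eq_zero_iff.1 h with h' | h'
        · exact h'
        · exact absurd h' hmS.2.ne'
      have hap : a * p.1 = 0 ∧ b * q.1 = 0 := by
        constructor <;> nlinarith [mul_nonneg ha hp.1, mul_nonneg hb hq.1, hm1]
      have hfm0 : f m = 0 := by rw [hfm, ← h0]; simp
      rw [hsmul, hfm0]
      have hfp : a * f p = 0 := by
        rcases mul_eq_zero.1 hap.1 with h | h
        · rw [h, zero_mul]
        · have : f p = 0 := by simp [hf, h]
          rw [this, mul_zero]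
      have hfq : b * f q = 0 := by
        rcases mul_eq_zero.1 hap.2 with h | h
        · rw [h, zero_mul]
        · have : f q = 0 := by simp [hf, h]
          rw [this, mul_zero]
      rw [hfp, hfq]; norm_num
    · -- w > 0 : tangent plane at w
      have hfmeq : f m = QQ w * m.1 + (Real.tanh w ^ 2 - QQ w * (w * Real.tanh w)) * m.2 := by
        have hm1' : m.1 = w * Real.tanh w * m.2 := by
          rw [hwu, div_mul_cancel₀ m.1 hmS.2.ne']
        rw [hfm, hm1']; ring
      have h1 := mul_le_mul_of_nonneg_left (haff w h0 p hp) ha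
      have h2 := mul_le_mul_of_nonneg_left (haff w h0 q hq) hb
      rw [hsmul, hfmeq, hm1, hm2]
      nlinarith [h1, h2]
end

section
/- Cramér–Rao-type bound for pure states: let |Ψ_θ⟩ be a differentiable family of unit vectors, J a self-adjoint operator, ⟨J⟩_θ = ⟨Ψ_θ|J|Ψ_θ⟩, Var[J]_θ = ⟨Ψ_θ|(J − ⟨J⟩_θ)²|Ψ_θ⟩, and I_θ = 4(⟨∂_θΨ_θ|∂_θΨ_θ⟩ − |⟨Ψ_θ|∂_θΨ_θ⟩|²) the quantum Fisher information. Then (∂_θ⟨J⟩_θ)² ≤ I_θ · Var[J]_θ. -/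
open Matrix

private lemma deriv_quad {n : Type*} [Fintype n]
    (Ψ : ℝ → n → ℂ) (θ₀ : ℝ) (dΨ : n → ℂ)
    (hd : ∀ i, HasDerivAt (fun θ => Ψ θ i) (dΨ i) θ₀)
    (M : Matrix n n ℂ) :
    HasDerivAt (fun θ => star (Ψ θ) ⬝ᵥ M.mulVec (Ψ θ))
      (star dΨ ⬝ᵥ M.mulVec (Ψ θ₀) + star (Ψ θ₀) ⬝ᵥ M.mulVec dΨ) θ₀ := by
  have h : ∀ i : n, HasDerivAt (fun θ => star (Ψ θ i) * ∑ j, M i j * Ψ θ j)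
      (star (dΨ i) * ∑ j, M i j * Ψ θ₀ j + star (Ψ θ₀ i) * ∑ j, M i j * dΨ j) θ₀ :=
    fun i => (hd i).star.mul (HasDerivAt.fun_sum fun j _ => (hd j).const_mul (M i j))
  have h2 := HasDerivAt.fun_sum (u := Finset.univ) fun i _ => h i
  convert h2 using 1
  · rfl
  all_goals simp [dotProduct, mulVec, Finset.sum_add_distrib]

private lemma dot_self_eq {n : Type*} [Fintype n] (x : n → ℂ) :
    (star x ⬝ᵥ x).re = ‖(WithLp.equiv 2 (n → ℂ)).symm x‖ ^ 2 := by
  set x' : EuclideanSpace ℂ n := (WithLp.equiv 2 (n → ℂ)).symm x with hx'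
  have h : star x ⬝ᵥ x = (inner ℂ x' x' : ℂ) :=
    ((EuclideanSpace.inner_eq_star_dotProduct x' x').trans (dotProduct_comm _ _)).symm
  rw [h, ← inner_self_eq_norm_sq (𝕜 := ℂ) x', RCLike.re_to_complex]

private lemma cs_dot {n : Type*} [Fintype n] (x y : n → ℂ) :
    ‖star x ⬝ᵥ y‖ ^ 2 ≤ (star x ⬝ᵥ x).re * (star y ⬝ᵥ y).re := by
  set x' : EuclideanSpace ℂ n := (WithLp.equiv 2 (n → ℂ)).symm x with hx'
  set y' : EuclideanSpace ℂ n := (WithLp.equiv 2 (n → ℂ)).symm y with hy'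
  have hx : star x ⬝ᵥ y = (inner ℂ x' y' : ℂ) :=
    ((EuclideanSpace.inner_eq_star_dotProduct x' y').trans (dotProduct_comm _ _)).symm
  rw [hx, dot_self_eq, dot_self_eq, ← hx', ← hy']
  calc ‖(inner ℂ x' y' : ℂ)‖ ^ 2 ≤ (‖x'‖ * ‖y'‖) ^ 2 := by
        have := norm_inner_le_norm (𝕜 := ℂ) x' y'
        exact pow_le_pow_left₀ (norm_nonneg _) this 2
    _ = ‖x'‖ ^ 2 * ‖y'‖ ^ 2 := by ring

/-- Quantum Cramér–Rao bound for a differentiable family of pure states: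
`(∂_θ⟨J⟩_θ)² ≤ I_θ · Var[J]_θ`. -/
theorem stmt_16 {n : Type*} [Fintype n] [DecidableEq n]
    (Ψ : ℝ → n → ℂ) (θ₀ : ℝ) (dΨ : n → ℂ)
    (hd : ∀ i, HasDerivAt (fun θ => Ψ θ i) (dΨ i) θ₀)
    (hnorm : ∀ θ, star (Ψ θ) ⬝ᵥ Ψ θ = 1)
    (J : Matrix n n ℂ) (hJ : J.IsHermitian)
    (avg : ℝ → ℝ)
    (havg : ∀ θ, avg θ = (star (Ψ θ) ⬝ᵥ J.mulVec (Ψ θ)).re)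
    (Var I : ℝ)
    (hVar : Var = (star (Ψ θ₀) ⬝ᵥ
      (((J - (avg θ₀ : ℂ) • 1) * (J - (avg θ₀ : ℂ) • 1)).mulVec (Ψ θ₀))).re)
    (hI : I = 4 * ((star dΨ ⬝ᵥ dΨ).re - ‖star (Ψ θ₀) ⬝ᵥ dΨ‖ ^ 2)) :
    ∀ d : ℝ, HasDerivAt avg d θ₀ → d ^ 2 ≤ I * Var := by
  intro d hdd
  set ψ : n → ℂ := Ψ θ₀ with hψ
  set c : ℝ := avg θ₀ with hc
  set A : Matrix n n ℂ := J - (c : ℂ) • 1 with hA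
  have hAH : Aᴴ = A := by
    simp [hA, conjTranspose_sub, conjTranspose_smul, hJ.eq, Complex.star_def]
  have hswap : ∀ (M : Matrix n n ℂ), Mᴴ = M → ∀ (x y : n → ℂ),
      star (M *ᵥ x) ⬝ᵥ y = star x ⬝ᵥ M *ᵥ y := by
    intro M hM x y
    rw [star_mulVec, hM, ← dotProduct_mulVec]
  have hψψ : star ψ ⬝ᵥ ψ = 1 := hnorm θ₀
  set a : ℂ := star ψ ⬝ᵥ dΨ with ha
  have hconj_a : star dΨ ⬝ᵥ ψ = star a := by
    rw [ha, star_dotProduct]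
  have hna : star a + a = 0 := by
    have h1 := deriv_quad Ψ θ₀ dΨ hd 1
    simp only [one_mulVec] at h1
    have h0 : HasDerivAt (fun θ => star (Ψ θ) ⬝ᵥ Ψ θ) 0 θ₀ := by
      have he : (fun θ => star (Ψ θ) ⬝ᵥ Ψ θ) = fun _ => (1 : ℂ) := funext hnorm
      rw [he]; exact hasDerivAt_const _ _
    have := h1.unique h0
    rw [hconj_a] at this
    exact this
  have hare : a.re = 0 := by
    have h := congrArg Complex.re hna
    simp only [Complex.add_re, Complex.zero_re, Complex.star_def, Complex.conj_re] at h
    linarith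
  have hcval : star ψ ⬝ᵥ J *ᵥ ψ = (c : ℂ) := by
    have hreal : star (star ψ ⬝ᵥ J *ᵥ ψ) = star ψ ⬝ᵥ J *ᵥ ψ :=
      (star_dotProduct (J *ᵥ ψ) ψ).symm.trans (hswap J hJ.eq ψ ψ)
    rw [Complex.star_def] at hreal
    have h2 : ((star ψ ⬝ᵥ J *ᵥ ψ).re : ℂ) = star ψ ⬝ᵥ J *ᵥ ψ :=
      Complex.conj_eq_iff_re.mp hreal
    rw [hc, havg θ₀, ← hψ]
    exact h2.symm
  have hAψ : A *ᵥ ψ = J *ᵥ ψ - (c : ℂ) • ψ := by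
    rw [hA, sub_mulVec, smul_mulVec, one_mulVec]
  have hψAψ : star ψ ⬝ᵥ A *ᵥ ψ = 0 := by
    rw [hAψ, dotProduct_sub, dotProduct_smul, hψψ, hcval, smul_eq_mul, mul_one, sub_self]
  set u : n → ℂ := A *ᵥ ψ with hu
  set v : n → ℂ := dΨ - a • ψ with hv
  set z : ℂ := star ψ ⬝ᵥ J *ᵥ dΨ with hz
  have hw : star u ⬝ᵥ v = z - (c : ℂ) * a := by
    rw [hu, hswap A hAH ψ v, hv, mulVec_sub, dotProduct_sub, mulVec_smul, dotProduct_smul,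
      hψAψ, smul_eq_mul, mul_zero, sub_zero, hA, sub_mulVec, smul_mulVec, one_mulVec,
      dotProduct_sub, dotProduct_smul, smul_eq_mul, ← hz, ← ha]
  have hwre : (star u ⬝ᵥ v).re = z.re := by
    rw [hw]
    simp [Complex.sub_re, Complex.mul_re, hare]
  have hD : HasDerivAt avg ((star dΨ ⬝ᵥ J *ᵥ ψ + star ψ ⬝ᵥ J *ᵥ dΨ).re) θ₀ := by
    have he : avg = fun θ => (star (Ψ θ) ⬝ᵥ J.mulVec (Ψ θ)).re := funext havg
    rw [he]
    exact Complex.reCLM.hasFDerivAt.comp_hasDerivAt θ₀ (deriv_quad Ψ θ₀ dΨ hd J)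
  have hdual : d = (star dΨ ⬝ᵥ J *ᵥ ψ + star ψ ⬝ᵥ J *ᵥ dΨ).re := hdd.unique hD
  have hdz : d = 2 * z.re := by
    have h1 : star dΨ ⬝ᵥ J *ᵥ ψ = star z := by
      rw [hz, star_dotProduct ψ (J *ᵥ dΨ), star_star, hswap J hJ.eq]
    rw [hdual, h1, Complex.add_re, Complex.star_def, Complex.conj_re, hz]
    ring
  have hVar' : Var = (star u ⬝ᵥ u).re := by
    rw [hVar, ← mulVec_mulVec, ← hswap A hAH ψ (A *ᵥ ψ), ← hu]
  have hvv : (star v ⬝ᵥ v).re = (star dΨ ⬝ᵥ dΨ).re - ‖a‖ ^ 2 := by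
    have hexp : star v ⬝ᵥ v = star dΨ ⬝ᵥ dΨ - a * star a := by
      simp only [hv, star_sub, star_smul, sub_dotProduct, dotProduct_sub, smul_dotProduct,
        dotProduct_smul, hψψ, hconj_a, smul_eq_mul, mul_one, ← ha]
      ring
    rw [hexp, Complex.sub_re]
    congr 1
    have h3 : a * star a = ((‖a‖ ^ 2 : ℝ) : ℂ) := by
      rw [Complex.star_def, Complex.mul_conj, Complex.normSq_eq_norm_sq]
    rw [h3, Complex.ofReal_re]
  have hI' : I = 4 * (star v ⬝ᵥ v).re := by
    rw [hI, hvv]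
  have hCS := cs_dot u v
  have huu : 0 ≤ (star u ⬝ᵥ u).re := by
    rw [dot_self_eq]; positivity
  have hvvn : 0 ≤ (star v ⬝ᵥ v).re := by
    rw [dot_self_eq]; positivity
  have habs : (star u ⬝ᵥ v).re ^ 2 ≤ ‖star u ⬝ᵥ v‖ ^ 2 := by
    have h1 : |(star u ⬝ᵥ v).re| ≤ ‖star u ⬝ᵥ v‖ := Complex.abs_re_le_norm _
    nlinarith [abs_nonneg (star u ⬝ᵥ v).re, sq_abs (star u ⬝ᵥ v).re]
  have hzre : z.re ^ 2 ≤ (star u ⬝ᵥ u).re * (star v ⬝ᵥ v).re := by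
    rw [← hwre]; exact le_trans habs hCS
  rw [hdz, hI', hVar']
  nlinarith [hzre]
end

section
/- For a differentiable two-parameter family of unit vectors |Ψ_θ⟩, the quantum Fisher information satisfies I_θ = 4 ∂²_{θ₁θ₂} ln|⟨Ψ_{θ₁}|Ψ_{θ₂}⟩| evaluated at θ₁ = θ₂ = θ, where I_θ = 4(⟨∂_θΨ_θ|∂_θΨ_θ⟩ − |⟨Ψ_θ|∂_θΨ_θ⟩|²). -/
open Matrix

private lemma hderiv_conj (g : ℝ → ℂ) (g' : ℂ) (x : ℝ) (h : HasDerivAt g g' x) :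
    HasDerivAt (fun t => (starRingEnd ℂ) (g t)) ((starRingEnd ℂ) g') x := by
  simpa [Function.comp_def] using (Complex.conjCLE.toContinuousLinearMap.hasFDerivAt.comp_hasDerivAt x h)

private lemma hderiv_re (g : ℝ → ℂ) (g' : ℂ) (x : ℝ) (h : HasDerivAt g g' x) :
    HasDerivAt (fun t => (g t).re) g'.re x := by
  simpa [Function.comp_def] using (Complex.reCLM.hasFDerivAt.comp_hasDerivAt x h)

private lemma hderiv_im (g : ℝ → ℂ) (g' : ℂ) (x : ℝ) (h : HasDerivAt g g' x) :
    HasDerivAt (fun t => (g t).im) g'.im x := by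
  simpa [Function.comp_def] using (Complex.imCLM.hasFDerivAt.comp_hasDerivAt x h)

private lemma hderiv_normSq (g : ℝ → ℂ) (g' : ℂ) (x : ℝ) (h : HasDerivAt g g' x) :
    HasDerivAt (fun t => Complex.normSq (g t))
      (2 * ((starRingEnd ℂ) (g x) * g').re) x := by
  have := ((hderiv_re g g' x h).fun_mul (hderiv_re g g' x h)).fun_add
    ((hderiv_im g g' x h).fun_mul (hderiv_im g g' x h))
  simp only [Complex.normSq_apply]
  refine this.congr_deriv ?_
  simp [Complex.mul_re, Complex.conj_re, Complex.conj_im]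
  ring

private lemma hderiv_slot1 {n : Type*} [Fintype n] (u : ℝ → n → ℂ) (u' v : n → ℂ) (x : ℝ)
    (h : ∀ i, HasDerivAt (fun t => u t i) (u' i) x) :
    HasDerivAt (fun t => star (u t) ⬝ᵥ v) (star u' ⬝ᵥ v) x := by
  simp only [dotProduct, Pi.star_apply, RCLike.star_def]
  exact HasDerivAt.fun_sum fun i _ => (hderiv_conj _ _ _ (h i)).mul_const (v i)

private lemma hderiv_slot2 {n : Type*} [Fintype n] (u : ℝ → n → ℂ) (u' w : n → ℂ) (x : ℝ)
    (h : ∀ i, HasDerivAt (fun t => u t i) (u' i) x) :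
    HasDerivAt (fun t => star w ⬝ᵥ u t) (star w ⬝ᵥ u') x := by
  simp only [dotProduct, Pi.star_apply, RCLike.star_def]
  exact HasDerivAt.fun_sum fun i _ => (h i).const_mul _

private lemma hderiv_lognorm (g : ℝ → ℂ) (g' : ℂ) (x : ℝ) (h : HasDerivAt g g' x)
    (hne : g x ≠ 0) :
    HasDerivAt (fun t => Real.log ‖g t‖) (((starRingEnd ℂ) (g x) * g').re / Complex.normSq (g x)) x := by
  have hns := hderiv_normSq g g' x h
  have hns0 : Complex.normSq (g x) ≠ 0 := by
    simpa [Complex.normSq_eq_zero] using hne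
  have hlog := (hns.log hns0).div_const 2
  have heq : (fun t => Real.log ‖g t‖) = fun t => Real.log (Complex.normSq (g t)) / 2 := by
    funext t
    rw [Complex.norm_def, Real.log_sqrt (Complex.normSq_nonneg _)]
  rw [heq]
  refine hlog.congr_deriv ?_
  field_simp

/-- The quantum Fisher information of a twice-differentiable family of unit vectors
equals `4 ∂²_{θ₁θ₂} ln|⟨Ψ_{θ₁}|Ψ_{θ₂}⟩|` evaluated at `θ₁ = θ₂ = θ`. -/
theorem stmt_17 {n : Type*} [Fintype n] [DecidableEq n]
    (Ψ dΨ ddΨ : ℝ → n → ℂ)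
    (hd : ∀ θ i, HasDerivAt (fun t => Ψ t i) (dΨ θ i) θ)
    (hdd : ∀ θ i, HasDerivAt (fun t => dΨ t i) (ddΨ θ i) θ)
    (hnorm : ∀ θ, star (Ψ θ) ⬝ᵥ Ψ θ = 1)
    (θ : ℝ) :
    4 * ((star (dΨ θ) ⬝ᵥ dΨ θ).re - ‖star (Ψ θ) ⬝ᵥ dΨ θ‖ ^ 2)
      = 4 * deriv (fun a => deriv (fun b => Real.log ‖star (Ψ a) ⬝ᵥ Ψ b‖) θ) θ := by
  set c : ℂ := star (Ψ θ) ⬝ᵥ dΨ θ with hc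
  set K : ℂ := star (dΨ θ) ⬝ᵥ dΨ θ with hK
  set F : ℝ → ℂ := fun a => star (Ψ a) ⬝ᵥ Ψ θ with hF
  set G : ℝ → ℂ := fun a => star (Ψ a) ⬝ᵥ dΨ θ with hG
  have hFa : ∀ a, HasDerivAt F (star (dΨ a) ⬝ᵥ Ψ θ) a :=
    fun a => hderiv_slot1 Ψ (dΨ a) (Ψ θ) a (fun i => hd a i)
  have hGa : HasDerivAt G K θ :=
    hderiv_slot1 Ψ (dΨ θ) (dΨ θ) θ (fun i => hd θ i)
  have hFθ : F θ = 1 := hnorm θ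
  -- c is purely imaginary
  have hcre : c.re = 0 := by
    have h1 : HasDerivAt (fun a => star (Ψ a) ⬝ᵥ Ψ a)
        ((starRingEnd ℂ) c + c) θ := by
      have h0 : HasDerivAt (fun a => star (Ψ a) ⬝ᵥ Ψ a)
          (star (dΨ θ) ⬝ᵥ Ψ θ + star (Ψ θ) ⬝ᵥ dΨ θ) θ := by
        simp only [dotProduct, Pi.star_apply, RCLike.star_def, ← Finset.sum_add_distrib]
        exact HasDerivAt.fun_sum fun i _ => (hderiv_conj _ _ _ (hd θ i)).fun_mul (hd θ i)
      convert h0 using 2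
      simp [hc, dotProduct, map_sum, mul_comm]
    have h2 : HasDerivAt (fun a => star (Ψ a) ⬝ᵥ Ψ a) 0 θ := by
      have : (fun a => star (Ψ a) ⬝ᵥ Ψ a) = fun _ => (1 : ℂ) := funext hnorm
      rw [this]; exact hasDerivAt_const θ 1
    have h3 := congrArg Complex.re (h1.unique h2)
    simp only [Complex.add_re, Complex.conj_re, Complex.zero_re] at h3
    linarith
  have hF'θ : star (dΨ θ) ⬝ᵥ Ψ θ = (starRingEnd ℂ) c := by
    simp [hc, dotProduct, map_sum, mul_comm]
  have hFθ' : HasDerivAt F ((starRingEnd ℂ) c) θ := by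
    have := hFa θ; rwa [hF'θ] at this
  have hFne : ∀ᶠ a in nhds θ, F a ≠ 0 :=
    (hFa θ).continuousAt.eventually_ne (by simp [hFθ])
  have key : (fun a => deriv (fun b => Real.log ‖star (Ψ a) ⬝ᵥ Ψ b‖) θ)
      =ᶠ[nhds θ] fun a => ((starRingEnd ℂ) (F a) * G a).re / Complex.normSq (F a) := by
    filter_upwards [hFne] with a ha
    have hb : HasDerivAt (fun b => star (Ψ a) ⬝ᵥ Ψ b) (G a) θ :=
      hderiv_slot2 Ψ (dΨ θ) (Ψ a) θ (fun i => hd θ i)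
    exact (hderiv_lognorm _ _ _ hb ha).deriv
  rw [key.deriv_eq]
  have hconjF : HasDerivAt (fun a => (starRingEnd ℂ) (F a)) ((starRingEnd ℂ) ((starRingEnd ℂ) c)) θ :=
    hderiv_conj F _ θ hFθ'
  have hN : HasDerivAt (fun a => ((starRingEnd ℂ) (F a) * G a).re)
      (((starRingEnd ℂ) ((starRingEnd ℂ) c) * G θ + (starRingEnd ℂ) (F θ) * K).re) θ :=
    hderiv_re _ _ _ (hconjF.mul hGa)
  have hD : HasDerivAt (fun a => Complex.normSq (F a))
      (2 * ((starRingEnd ℂ) (F θ) * (starRingEnd ℂ) c).re) θ :=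
    hderiv_normSq F _ θ hFθ'
  have hDθ : Complex.normSq (F θ) ≠ 0 := by simp [hFθ]
  rw [(hN.fun_div hD hDθ).deriv]
  have hGθ : G θ = c := rfl
  have hnc : ‖c‖ ^ 2 = Complex.normSq c := by
    rw [Complex.sq_norm]
  rw [hGθ, hFθ, hnc]
  simp only [Complex.normSq_one, _root_.map_one, Complex.conj_conj, one_pow, div_one,
    mul_one, one_mul]
  simp only [Complex.add_re, Complex.mul_re, Complex.normSq_apply, hcre,
    Complex.conj_re, Complex.conj_im]
  ring
end
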